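/- Let (X_n) be a transient Markov chain on a countable state space with Green's function g, K a nonempty finite set, and e_K its equilibrium measure. Then for every starting point x, P_x[H_K < ∞] = ∑_{y ∈ K} g(x,y)·e_K(y), where H_K is the first hitting time of K. -/

import Mathlib

open MeasureTheory
open scoped ENNReal

/-- A (time-homogeneous) Markov chain on a countable state space `S`, encoded by the family
of path-space laws `Pr x` of the chain started at `x`, together with the Markov property
expressed on cylinder events. -/
structure MarkovChain (S : Type*) [MeasurableSpace S] where
  Pr : S → Measure (ℕ → S)
  isProb : ∀ x, IsProbabilityMeasure (Pr x)
  start : ∀ x, Pr x {ω | ω 0 = x} = 1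
  markov : ∀ (x : S) (n : ℕ) (pre : Fin (n + 1) → S) (B : Set (ℕ → S)), MeasurableSet B →
    Pr x ({ω | ∀ i : Fin (n + 1), ω i.val = pre i} ∩ {ω | (fun k => ω (n + k)) ∈ B})
      = Pr x {ω | ∀ i : Fin (n + 1), ω i.val = pre i} * Pr (pre (Fin.last n)) B

namespace MarkovChain

variable {S : Type*} [MeasurableSpace S]

/-- Green's function: expected number of visits to `y` starting from `x`. -/
noncomputable def green (M : MarkovChain S) (x y : S) : ℝ≥0∞ :=
  ∑' n : ℕ, M.Pr x {ω | ω n = y}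

/-- Transience: the Green's function is finite everywhere. -/
def Transient (M : MarkovChain S) : Prop := ∀ x y, M.green x y < ⊤

/-- Irreducibility: every state can be reached from every state. -/
def Irreducible (M : MarkovChain S) : Prop := ∀ x y, ∃ n : ℕ, 0 < M.Pr x {ω | ω n = y}

open scoped Classical in
/-- Equilibrium measure of a finite set `K`:
`e_K(y) = P_y[no return to K at positive times] · 1{y ∈ K}`. -/
noncomputable def equil (M : MarkovChain S) (K : Finset S) (y : S) : ℝ :=
  if y ∈ K then (M.Pr y {ω | ∀ n : ℕ, 1 ≤ n → ω n ∉ (K : Set S)}).toReal else 0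

end MarkovChain

section Helpers
set_option linter.unusedSectionVars false

variable {S : Type*} [MeasurableSpace S] [MeasurableSingletonClass S] [Countable S]

lemma meas_coord (n : ℕ) (y : S) : MeasurableSet {ω : ℕ → S | ω n = y} := by
  have : {ω : ℕ → S | ω n = y} = (fun ω : ℕ → S => ω n) ⁻¹' {y} := by ext ω; simp
  rw [this]; exact (measurable_pi_apply n) (measurableSet_singleton y)

lemma meas_coord_mem (n : ℕ) (K : Set S) (hKm : MeasurableSet K) :
    MeasurableSet {ω : ℕ → S | ω n ∈ K} :=
  (measurable_pi_apply n) hKm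

lemma meas_cyl (n : ℕ) (pre : Fin (n+1) → S) :
    MeasurableSet {ω : ℕ → S | ∀ i : Fin (n+1), ω i.val = pre i} := by
  have : {ω : ℕ → S | ∀ i : Fin (n+1), ω i.val = pre i}
      = ⋂ i : Fin (n+1), {ω : ℕ → S | ω i.val = pre i} := by
    ext ω; simp [Set.mem_iInter]
  rw [this]
  exact MeasurableSet.iInter fun i => meas_coord _ _

lemma meas_shift (n : ℕ) : Measurable (fun (ω : ℕ → S) => (fun k => ω (n+k))) :=
  measurable_pi_lambda _ fun k => measurable_pi_apply (n+k)

-- decomposition of {ω n = y} into cylinders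
lemma coord_eq_iUnion (n : ℕ) (y : S) :
    {ω : ℕ → S | ω n = y}
      = ⋃ p : {p : Fin (n+1) → S // p (Fin.last n) = y},
          {ω : ℕ → S | ∀ i : Fin (n+1), ω i.val = p.1 i} := by
  ext ω
  constructor
  · intro h
    refine Set.mem_iUnion.2 ⟨⟨fun i => ω i.val, by simpa using h⟩, ?_⟩
    intro i; rfl
  · rintro h
    rcases Set.mem_iUnion.1 h with ⟨p, hp⟩
    have := hp (Fin.last n)
    simpa [p.2] using this

lemma cyl_disjoint (n : ℕ) (p q : Fin (n+1) → S) (hpq : p ≠ q) :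
    Disjoint {ω : ℕ → S | ∀ i : Fin (n+1), ω i.val = p i}
             {ω : ℕ → S | ∀ i : Fin (n+1), ω i.val = q i} := by
  rw [Set.disjoint_left]
  intro ω hp hq
  apply hpq
  funext i
  rw [← hp i, ← hq i]

lemma markov_pin (M : MarkovChain S) (x y : S) (n : ℕ) (B : Set (ℕ → S))
    (hB : MeasurableSet B) :
    M.Pr x ({ω | ω n = y} ∩ {ω | (fun k => ω (n+k)) ∈ B})
      = M.Pr x {ω | ω n = y} * M.Pr y B := by
  rw [coord_eq_iUnion n y, Set.iUnion_inter]
  rw [measure_iUnion, measure_iUnion]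
  · rw [← ENNReal.tsum_mul_right]
    congr 1
    funext p
    have := M.markov x n p.1 B hB
    rw [p.2] at this
    exact this
  · intro p q hpq
    exact cyl_disjoint n p.1 q.1 (fun h => hpq (Subtype.ext h))
  · intro p; exact meas_cyl n p.1
  · intro p q hpq
    exact Disjoint.mono Set.inter_subset_left Set.inter_subset_left
      (cyl_disjoint n p.1 q.1 (fun h => hpq (Subtype.ext h)))
  · intro p; exact (meas_cyl n p.1).inter (meas_shift n hB)

variable (K : Finset S)

def BK (K : Finset S) : Set (ℕ → S) := {ω : ℕ → S | ∀ m : ℕ, 1 ≤ m → ω m ∉ (K : Set S)}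

lemma meas_BK : MeasurableSet (BK K) := by
  have : BK K = ⋂ m : ℕ, ⋂ (_ : 1 ≤ m), {ω : ℕ → S | ω m ∈ (K : Set S)}ᶜ := by
    ext ω; simp [BK]
  rw [this]
  exact MeasurableSet.iInter fun m => MeasurableSet.iInter fun _ =>
    (meas_coord_mem m _ (K.finite_toSet.measurableSet)).compl

def AA (K : Finset S) (n : ℕ) (y : S) : Set (ℕ → S) :=
  {ω | ω n = y} ∩ {ω | (fun k => ω (n+k)) ∈ BK K}

lemma AA_sub (n : ℕ) (y : S) (hy : y ∈ K) (ω : ℕ → S) (hω : ω ∈ AA K n y) (m : ℕ)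
    (hm : n < m) : ω m ∉ (K : Set S) := by
  obtain ⟨h1, h2⟩ := hω
  have := h2 (m - n) (by omega)
  simp only at this
  rwa [Nat.add_sub_cancel' (le_of_lt hm)] at this

lemma AA_disj (n m : ℕ) (y z : S) (hy : y ∈ K) (hz : z ∈ K) (h : (n, y) ≠ (m, z)) :
    Disjoint (AA K n y) (AA K m z) := by
  rw [Set.disjoint_left]
  intro ω h1 h2
  rcases lt_trichotomy n m with hnm | hnm | hnm
  · exact AA_sub K n y hy ω h1 m hnm (h2.1 ▸ hz)
  · subst hnm
    have : y = z := h1.1.symm.trans h2.1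
    exact h (by rw [this])
  · exact AA_sub K m z hz ω h2 n hnm (h1.1 ▸ hy)

noncomputable def visits (K : Finset S) (ω : ℕ → S) : ℝ≥0∞ :=
  ∑' n : ℕ, Set.indicator {ω : ℕ → S | ω n ∈ (K : Set S)} (fun _ => 1) ω

lemma meas_visits : Measurable (visits (S := S) K) := by
  apply Measurable.ennreal_tsum
  intro n
  exact (measurable_const).indicator (meas_coord_mem n _ K.finite_toSet.measurableSet)

lemma coord_mem_eq_iUnion (n : ℕ) :
    {ω : ℕ → S | ω n ∈ (K : Set S)} = ⋃ y ∈ K, {ω : ℕ → S | ω n = y} := by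
  ext ω; simp

lemma lint_visits (M : MarkovChain S) (x : S) :
    ∫⁻ ω, visits K ω ∂ (M.Pr x) = ∑ y ∈ K, M.green x y := by
  simp only [visits]
  rw [lintegral_tsum (fun n => ((measurable_const).indicator
      (meas_coord_mem n _ K.finite_toSet.measurableSet)).aemeasurable)]
  have h1 : ∀ n : ℕ, ∫⁻ ω, Set.indicator {ω : ℕ → S | ω n ∈ (K : Set S)} (fun _ => 1) ω
      ∂ (M.Pr x) = ∑ y ∈ K, M.Pr x {ω : ℕ → S | ω n = y} := by
    intro n
    have : ∫⁻ ω, Set.indicator {ω : ℕ → S | ω n ∈ (K : Set S)} (fun _ => 1) ω ∂ (M.Pr x)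
        = M.Pr x {ω : ℕ → S | ω n ∈ (K : Set S)} :=
      lintegral_indicator_one (meas_coord_mem n _ K.finite_toSet.measurableSet)
    rw [this, coord_mem_eq_iUnion]
    rw [measure_biUnion_finset ?_ (fun y _ => meas_coord n y)]
    intro y _ z _ hyz
    simp only [Function.onFun]
    rw [Set.disjoint_left]
    intro ω h1 h2
    exact hyz (h1.symm.trans h2)
  simp only [h1]
  rw [Summable.tsum_finsetSum (fun y _ => ENNReal.summable)]
  rfl

lemma visits_top (ω : ℕ → S) (h : {n : ℕ | ω n ∈ (K : Set S)}.Infinite) :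
    visits K ω = ⊤ := by
  have hinf : Infinite {n : ℕ | ω n ∈ (K : Set S)} := h.to_subtype
  refine top_unique ?_
  calc (⊤ : ℝ≥0∞) = ∑' _ : {n : ℕ | ω n ∈ (K : Set S)}, (1 : ℝ≥0∞) :=
        (ENNReal.tsum_const_eq_top_of_ne_zero one_ne_zero).symm
    _ ≤ visits K ω := by
        refine Summable.tsum_le_tsum_of_inj (↑· : {n : ℕ | ω n ∈ (K : Set S)} → ℕ)
          Subtype.val_injective (fun _ _ => zero_le) ?_ ENNReal.summable ENNReal.summable
        intro n
        have : ω ∈ {ω' : ℕ → S | ω' (n : ℕ) ∈ (K : Set S)} := n.2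
        rw [Set.indicator_of_mem this]

lemma AA_measure (M : MarkovChain S) (x : S) (n : ℕ) (y : S) :
    M.Pr x (AA K n y) = M.Pr x {ω | ω n = y} * M.Pr y (BK K) :=
  markov_pin M x y n (BK K) (meas_BK K)

lemma main_ennreal (M : MarkovChain S) (htr : ∀ x y, M.green x y < ⊤) (x : S) :
    M.Pr x {ω | ∃ n : ℕ, ω n ∈ (K : Set S)}
      = ∑ y ∈ K, M.green x y * M.Pr y (BK K) := by
  classical
  set U : Set (ℕ → S) := ⋃ n : ℕ, ⋃ y : K, AA K n y.1 with hU
  have hAAm : ∀ (n : ℕ) (y : S), MeasurableSet (AA K n y) := fun n y =>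
    (meas_coord n y).inter (meas_shift n (meas_BK K))
  -- measure of U
  have hUmeas : M.Pr x U = ∑' n : ℕ, ∑ y ∈ K, M.Pr x {ω | ω n = y} * M.Pr y (BK K) := by
    rw [hU, measure_iUnion]
    · congr 1
      funext n
      rw [measure_iUnion]
      · rw [← Finset.tsum_subtype]
        congr 1
        funext y
        exact AA_measure K M x n y
      · intro y z hyz
        exact AA_disj K n n y.1 z.1 y.2 z.2 (by simpa using fun h => hyz (Subtype.ext h))
      · intro y; exact hAAm n y.1
    · intro n m hnm
      simp only [Set.disjoint_iUnion_left, Set.disjoint_iUnion_right]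
      intro y z
      exact AA_disj K n m z.1 y.1 z.2 y.2 (by simp [hnm])
    · intro n; exact MeasurableSet.iUnion fun y => hAAm n y.1
  have hUm : MeasurableSet U :=
    MeasurableSet.iUnion fun n => MeasurableSet.iUnion fun y => hAAm n y.1
  -- U has the same measure as the hitting event
  have hsub1 : U ⊆ {ω | ∃ n : ℕ, ω n ∈ (K : Set S)} := by
    rintro ω hω
    simp only [hU, Set.mem_iUnion] at hω
    obtain ⟨n, y, hy⟩ := hω
    exact ⟨n, hy.1 ▸ y.2⟩
  -- null set of infinitely many visits
  have hlt : ∫⁻ ω, visits K ω ∂ (M.Pr x) < ⊤ := by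
    rw [lint_visits]
    exact ENNReal.sum_lt_top.2 fun y _ => htr x y
  have hae : M.Pr x {ω | visits K ω = ⊤} = 0 := by
    have := ae_lt_top (meas_visits K) hlt.ne
    rw [ae_iff] at this
    convert this using 2
    ext ω
    simp [lt_top_iff_ne_top]
  have hsub2 : {ω : ℕ → S | ∃ n : ℕ, ω n ∈ (K : Set S)} ⊆ U ∪ {ω | visits K ω = ⊤} := by
    intro ω hω
    by_cases hfin : {n : ℕ | ω n ∈ (K : Set S)}.Finite
    · left
      obtain ⟨n0, hn0⟩ := hω
      have hne : hfin.toFinset.Nonempty := ⟨n0, by simpa using hn0⟩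
      set m := hfin.toFinset.max' hne with hm
      have hmK : ω m ∈ (K : Set S) := by
        have := hfin.toFinset.max'_mem hne
        simpa using this
      simp only [hU, Set.mem_iUnion]
      refine ⟨m, ⟨ω m, hmK⟩, rfl, ?_⟩
      intro j hj
      intro hmem
      have : m + j ∈ hfin.toFinset := by simpa using hmem
      have := hfin.toFinset.le_max' _ this
      omega
    · right
      exact visits_top K ω (Set.not_infinite.not_right.mp (fun h => hfin h))
  have hPr : M.Pr x {ω | ∃ n : ℕ, ω n ∈ (K : Set S)} = M.Pr x U := by
    refine le_antisymm ?_ (measure_mono hsub1)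
    calc M.Pr x {ω | ∃ n : ℕ, ω n ∈ (K : Set S)}
        ≤ M.Pr x (U ∪ {ω | visits K ω = ⊤}) := measure_mono hsub2
      _ ≤ M.Pr x U + M.Pr x {ω | visits K ω = ⊤} := measure_union_le _ _
      _ = M.Pr x U := by rw [hae, add_zero]
  rw [hPr, hUmeas, Summable.tsum_finsetSum (fun y _ => ENNReal.summable)]
  refine Finset.sum_congr rfl fun y _ => ?_
  rw [ENNReal.tsum_mul_right]
  rfl

end Helpers

/-- Last-exit decomposition: for a transient chain and a nonempty finite set `K`,
`P_x[H_K < ∞] = ∑_{y ∈ K} g(x,y) e_K(y)`. -/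
theorem stmt9 {S : Type*} [MeasurableSpace S] [MeasurableSingletonClass S] [Countable S]
    (M : MarkovChain S) (htr : M.Transient)
    (K : Finset S) (hK : K.Nonempty) (x : S) :
    (M.Pr x {ω | ∃ n : ℕ, ω n ∈ (K : Set S)}).toReal
      = ∑ y ∈ K, (M.green x y).toReal * M.equil K y := by
  rw [main_ennreal K M htr x]
  rw [ENNReal.toReal_sum (fun y _ =>
    ENNReal.mul_ne_top (htr x y).ne (by have := M.isProb y; exact measure_ne_top _ _))]
  refine Finset.sum_congr rfl fun y hy => ?_
  rw [ENNReal.toReal_mul, MarkovChain.equil, if_pos hy]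
  rfl
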